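/- Let m,N≥1 be integers, α>1, L>0, B≥1, η≥0. Let E⊆{x∈ℤ^m : |x|<N} and let T,T':E×E→ℂ be matrices. Assume: (i) T is invertible and |T^{−1}(x,x')| ≤ B e^{−αL|x−x'|_α} for all x,x'∈E; (ii) |T'(x,x')−T(x,x')| ≤ η e^{−αL|x−x'|_α} for all x,x'∈E; and (iii) η·(2N)^{2m+1}·B² ≤ 1/2. Then T' is invertible and |T'^{−1}(x,x')| ≤ 2B e^{−αL|x−x'|_α} for all x,x'∈E. -/

import Mathlib

open scoped BigOperators NNReal

noncomputable section

/-- `|x|_α = Σ_j |x_j|^{1/α}` for an integer vector. -/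
def adist (α : ℝ) {m : ℕ} (x : Fin m → ℤ) : ℝ :=
  ∑ j, |(x j : ℝ)| ^ (1 / α)

attribute [local instance] Matrix.linftyOpNormedRing Matrix.linftyOpNormedAlgebra

private lemma real_rpow_add_le {a b p : ℝ} (ha : 0 ≤ a) (hb : 0 ≤ b) (hp : 0 ≤ p)
    (hp1 : p ≤ 1) : (a + b) ^ p ≤ a ^ p + b ^ p := by
  lift a to ℝ≥0 using ha
  lift b to ℝ≥0 using hb
  exact_mod_cast NNReal.rpow_add_le_add_rpow a b hp hp1

private lemma adist_nonneg' {α : ℝ} {m : ℕ} (x : Fin m → ℤ) : 0 ≤ adist α x :=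
  Finset.sum_nonneg fun j _ => Real.rpow_nonneg (abs_nonneg _) _

private lemma adist_add_le {α : ℝ} (hα : 1 < α) {m : ℕ} (a b : Fin m → ℤ) :
    adist α (a + b) ≤ adist α a + adist α b := by
  have hp0 : (0:ℝ) ≤ 1 / α := by positivity
  have hp1 : 1 / α ≤ 1 := by
    rw [div_le_one (by linarith)]; linarith
  unfold adist
  rw [← Finset.sum_add_distrib]
  refine Finset.sum_le_sum fun j _ => ?_
  have h1 : |(((a + b) j : ℤ) : ℝ)| ≤ |((a j : ℤ) : ℝ)| + |((b j : ℤ) : ℝ)| := by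
    simp only [Pi.add_apply]
    push_cast
    exact abs_add_le _ _
  calc |(((a + b) j : ℤ) : ℝ)| ^ (1 / α)
      ≤ (|((a j : ℤ) : ℝ)| + |((b j : ℤ) : ℝ)|) ^ (1 / α) :=
        Real.rpow_le_rpow (abs_nonneg _) h1 hp0
    _ ≤ |((a j : ℤ) : ℝ)| ^ (1 / α) + |((b j : ℤ) : ℝ)| ^ (1 / α) :=
        real_rpow_add_le (abs_nonneg _) (abs_nonneg _) hp0 hp1

private lemma entry_bound_mul {ι : Type*} [Fintype ι] {w : ι → ι → ℝ}
    (hwm : ∀ x z x', w x z * w z x' ≤ w x x') (hw0 : ∀ x x', 0 ≤ w x x')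
    {A B : Matrix ι ι ℂ} {c d : ℝ} (hc : 0 ≤ c) (hd : 0 ≤ d)
    (hA : ∀ x x', ‖A x x'‖ ≤ c * w x x') (hB : ∀ x x', ‖B x x'‖ ≤ d * w x x') (x x' : ι) :
    ‖(A * B) x x'‖ ≤ (Fintype.card ι : ℝ) * c * d * w x x' := by
  have hstep : ∀ z : ι, ‖A x z * B z x'‖ ≤ c * d * w x x' := by
    intro z
    rw [norm_mul]
    calc ‖A x z‖ * ‖B z x'‖ ≤ (c * w x z) * (d * w z x') := by
          exact mul_le_mul (hA x z) (hB z x') (norm_nonneg _) (mul_nonneg hc (hw0 x z))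
      _ = c * d * (w x z * w z x') := by ring
      _ ≤ c * d * w x x' := by
          exact mul_le_mul_of_nonneg_left (hwm x z x') (mul_nonneg hc hd)
  calc ‖(A * B) x x'‖ = ‖∑ z, A x z * B z x'‖ := by rw [Matrix.mul_apply]
    _ ≤ ∑ z : ι, ‖A x z * B z x'‖ := norm_sum_le _ _
    _ ≤ ∑ _z : ι, c * d * w x x' := Finset.sum_le_sum fun z _ => hstep z
    _ = (Fintype.card ι : ℝ) * c * d * w x x' := by
        rw [Finset.sum_const, Finset.card_univ, nsmul_eq_mul]; ring

set_option maxHeartbeats 1000000 in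
/-- stability of pointwise off-diagonal decay of the inverse
under a small perturbation. -/
theorem inverse_stable_pointwise_decay {m N : ℕ} (hm : 1 ≤ m) (hN : 1 ≤ N)
    {α L B η : ℝ} (hα : 1 < α) (hL : 0 < L) (hB : 1 ≤ B) (hη : 0 ≤ η)
    (E : Finset (Fin m → ℤ)) (hE : ∀ x ∈ E, ∀ j, |x j| < (N : ℤ))
    (T T' : Matrix E E ℂ)
    (hTunit : IsUnit T)
    (hTdecay : ∀ x x' : E,
      ‖T⁻¹ x x'‖ ≤ B * Real.exp (-(α * L * adist α ((x : Fin m → ℤ) - (x' : Fin m → ℤ)))))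
    (hdiff : ∀ x x' : E, ‖T' x x' - T x x'‖ ≤
      η * Real.exp (-(α * L * adist α ((x : Fin m → ℤ) - (x' : Fin m → ℤ)))))
    (hsmall : η * (2 * (N : ℝ)) ^ (2 * m + 1) * B ^ 2 ≤ 1 / 2) :
    IsUnit T' ∧
      ∀ x x' : E, ‖T'⁻¹ x x'‖ ≤
        2 * B * Real.exp (-(α * L * adist α ((x : Fin m → ℤ) - (x' : Fin m → ℤ)))) := by
  classical
  haveI : CompleteSpace (Matrix E E ℂ) := FiniteDimensional.complete ℂ _
  have hB0 : (0:ℝ) < B := lt_of_lt_of_le one_pos hB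
  have hαL : (0:ℝ) < α * L := mul_pos (lt_trans one_pos hα) hL
  -- the weight function
  set w : E → E → ℝ :=
    fun x x' => Real.exp (-(α * L * adist α ((x : Fin m → ℤ) - (x' : Fin m → ℤ)))) with hwdef
  have hw0 : ∀ x x' : E, 0 ≤ w x x' := fun x x' => (Real.exp_pos _).le
  have hw1 : ∀ x x' : E, w x x' ≤ 1 := by
    intro x x'
    apply Real.exp_le_one_iff.2
    have := adist_nonneg' (α := α) ((x : Fin m → ℤ) - (x' : Fin m → ℤ))
    nlinarith
  have hwm : ∀ x z x' : E, w x z * w z x' ≤ w x x' := by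
    intro x z x'
    rw [hwdef]
    simp only []
    rw [← Real.exp_add]
    apply Real.exp_le_exp.2
    have htri : adist α ((x : Fin m → ℤ) - (x' : Fin m → ℤ)) ≤
        adist α ((x : Fin m → ℤ) - (z : Fin m → ℤ)) +
        adist α ((z : Fin m → ℤ) - (x' : Fin m → ℤ)) := by
      have h := adist_add_le hα ((x : Fin m → ℤ) - (z : Fin m → ℤ))
        ((z : Fin m → ℤ) - (x' : Fin m → ℤ))
      rwa [sub_add_sub_cancel] at h
    nlinarith
  -- cardinality bound
  set e : ℝ := (E.card : ℝ) with hedef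
  have he0 : (0:ℝ) ≤ e := Nat.cast_nonneg _
  have hcard : Fintype.card E = E.card := Fintype.card_coe E
  have hecard : E.card ≤ (2 * N) ^ m := by
    have hsub : E ⊆ Fintype.piFinset fun _ : Fin m => Finset.Ioo (-(N:ℤ)) (N:ℤ) := by
      intro x hx
      rw [Fintype.mem_piFinset]
      intro j
      rw [Finset.mem_Ioo]
      have := hE x hx j
      constructor <;> [exact neg_lt_of_abs_lt this; exact lt_of_abs_lt this]
    calc E.card ≤ (Fintype.piFinset fun _ : Fin m => Finset.Ioo (-(N:ℤ)) (N:ℤ)).card :=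
          Finset.card_le_card hsub
      _ = ∏ _j : Fin m, (Finset.Ioo (-(N:ℤ)) (N:ℤ)).card := Fintype.card_piFinset _
      _ ≤ (2 * N) ^ m := by
          rw [Finset.prod_const, Finset.card_univ, Fintype.card_fin]
          apply Nat.pow_le_pow_left
          rw [Int.card_Ioo]
          omega
  have he_le : e ≤ (2 * (N:ℝ)) ^ m := by
    rw [hedef]
    calc (E.card : ℝ) ≤ (((2 * N) ^ m : ℕ) : ℝ) := by exact_mod_cast hecard
      _ = (2 * (N:ℝ)) ^ m := by push_cast; ring
  -- the perturbation parameter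
  set ε : ℝ := η * B * e ^ 2 with hεdef
  have hε0 : 0 ≤ ε := by positivity
  have hN1 : (1:ℝ) ≤ 2 * (N:ℝ) := by
    have : (1:ℝ) ≤ (N:ℝ) := by exact_mod_cast hN
    linarith
  have hεhalf : ε ≤ 1 / 2 := by
    have hP0 : (0:ℝ) ≤ (2 * (N:ℝ)) ^ m := by positivity
    have h1 : ε ≤ η * B * ((2 * (N:ℝ)) ^ m) ^ 2 := by
      rw [hεdef]; gcongr
    have h2 : ((2 * (N:ℝ)) ^ m) ^ 2 = (2 * (N:ℝ)) ^ (2 * m) := by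
      rw [← pow_mul, mul_comm m 2]
    have h3 : (2 * (N:ℝ)) ^ (2 * m + 1) = (2 * (N:ℝ)) ^ (2 * m) * (2 * (N:ℝ)) := pow_succ _ _
    have hQ1 : (1:ℝ) ≤ (2 * (N:ℝ)) ^ (2 * m) := by simpa using pow_le_pow_left₀ zero_le_one hN1 (2*m)
    -- η * B * Q ≤ η * (Q * 2N) * B^2
    have h4 : η * B * ((2 * (N:ℝ)) ^ (2 * m)) ≤
        η * (2 * (N:ℝ)) ^ (2 * m + 1) * B ^ 2 := by
      rw [h3]
      have h2NB : (1:ℝ) ≤ (2 * (N:ℝ)) * B := by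
        have := mul_le_mul hN1 hB zero_le_one (by linarith : (0:ℝ) ≤ 2 * (N:ℝ))
        simpa using this
      nlinarith [mul_nonneg (mul_nonneg hη (le_of_lt hB0)) (le_trans zero_le_one hQ1), h2NB]
    calc ε ≤ η * B * ((2 * (N:ℝ)) ^ m) ^ 2 := h1
      _ = η * B * ((2 * (N:ℝ)) ^ (2 * m)) := by rw [h2]
      _ ≤ η * (2 * (N:ℝ)) ^ (2 * m + 1) * B ^ 2 := h4
      _ ≤ 1 / 2 := hsmall
  have hεlt : ε < 1 := lt_of_le_of_lt hεhalf (by norm_num)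
  -- the perturbation matrix
  have hTdet : IsUnit T.det := (Matrix.isUnit_iff_isUnit_det T).mp hTunit
  have hTT : T * T⁻¹ = 1 := Matrix.mul_nonsing_inv T hTdet
  set Δ : Matrix E E ℂ := T' - T with hΔdef
  set M : Matrix E E ℂ := T⁻¹ * Δ with hMdef
  have hΔbound : ∀ x x' : E, ‖Δ x x'‖ ≤ η * w x x' := by
    intro x x'
    simpa [hΔdef, hwdef] using hdiff x x'
  have hTinvbound : ∀ x x' : E, ‖T⁻¹ x x'‖ ≤ B * w x x' := fun x x' => hTdecay x x'
  have hMbound : ∀ x x' : E, ‖M x x'‖ ≤ e * B * η * w x x' := by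
    intro x x'
    have := entry_bound_mul hwm hw0 (le_of_lt hB0) hη hTinvbound hΔbound x x'
    rwa [hcard, ← hedef] at this
  have hnMbound : ∀ x x' : E, ‖(-M) x x'‖ ≤ e * B * η * w x x' := by
    intro x x'
    rw [Matrix.neg_apply, norm_neg]; exact hMbound x x'
  -- norm bound for -M
  have hMnorm : ‖(-M)‖ < 1 := by
    have hrow : ∀ x : E, ∑ x' : E, ‖(-M) x x'‖₊ ≤ ε.toNNReal := by
      intro x
      rw [← NNReal.coe_le_coe]
      push_cast
      rw [Real.coe_toNNReal ε hε0]
      calc ∑ x' : E, ‖(-M) x x'‖ ≤ ∑ x' : E, e * B * η * 1 := by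
            apply Finset.sum_le_sum
            intro x' _
            calc ‖(-M) x x'‖ ≤ e * B * η * w x x' := hnMbound x x'
              _ ≤ e * B * η * 1 := by
                  apply mul_le_mul_of_nonneg_left (hw1 x x') (by positivity)
        _ = e * (e * B * η * 1) := by
            rw [Finset.sum_const, Finset.card_univ, hcard, nsmul_eq_mul, hedef]
        _ = ε := by rw [hεdef]; ring
    calc ‖(-M)‖ ≤ ε := by
          rw [Matrix.linfty_opNorm_def]
          calc ((Finset.univ.sup fun x : E => ∑ x' : E, ‖(-M) x x'‖₊ : NNReal) : ℝ)
              ≤ (ε.toNNReal : ℝ) := by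
                exact_mod_cast Finset.sup_le fun x _ => hrow x
            _ = ε := Real.coe_toNNReal ε hε0
      _ < 1 := hεlt
  -- factorization T' = T * (1 + M)
  have hfact : T' = T * (1 + M) := by
    rw [hMdef, mul_add, mul_one, ← mul_assoc, hTT, one_mul, hΔdef]
    abel
  have hunit1 : IsUnit (1 + M) := by
    have h := isUnit_one_sub_of_norm_lt_one hMnorm
    rwa [sub_neg_eq_add] at h
  have hT'unit : IsUnit T' := hfact ▸ hTunit.mul hunit1
  refine ⟨hT'unit, ?_⟩
  -- the inverse as a geometric series
  have hinv : T'⁻¹ = (∑' k : ℕ, (-M) ^ k) * T⁻¹ := by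
    rw [hfact, Matrix.mul_inv_rev]
    congr 1
    rw [Matrix.nonsing_inv_eq_ringInverse, ← sub_neg_eq_add,
      ← geom_series_eq_inverse (-M) hMnorm]
    rfl
  -- entrywise bound on powers
  have pow_bound : ∀ (k : ℕ) (x x' : E), ‖((-M) ^ k * T⁻¹) x x'‖ ≤ ε ^ k * B * w x x' := by
    intro k
    induction k with
    | zero => intro x x'; simpa using hTinvbound x x'
    | succ k ih =>
      intro x x'
      have hrw : (-M) ^ (k + 1) * T⁻¹ = (-M) * ((-M) ^ k * T⁻¹) := by
        rw [pow_succ', mul_assoc]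
      rw [hrw]
      have h := entry_bound_mul hwm hw0 (mul_nonneg (mul_nonneg he0 hB0.le) hη : (0:ℝ) ≤ e * B * η)
        (mul_nonneg (pow_nonneg hε0 k) hB0.le : (0:ℝ) ≤ ε ^ k * B) hnMbound ih x x'
      rw [hcard, ← hedef] at h
      calc ‖((-M) * ((-M) ^ k * T⁻¹)) x x'‖ ≤ e * (e * B * η) * (ε ^ k * B) * w x x' := h
        _ = ε ^ (k + 1) * B * w x x' := by rw [hεdef, pow_succ]; ring
  -- sum the series entrywise
  intro x x'
  have hgeo : HasSum (fun k : ℕ => (-M) ^ k) (∑' k : ℕ, (-M) ^ k) :=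
    (summable_geometric_of_norm_lt_one hMnorm).hasSum
  have hsum2 : HasSum (fun k : ℕ => (-M) ^ k * T⁻¹) ((∑' k : ℕ, (-M) ^ k) * T⁻¹) :=
    hgeo.mul_right _
  -- entry evaluation is a continuous linear map
  let φ : Matrix E E ℂ →ₗ[ℂ] ℂ :=
    { toFun := fun A => A x x'
      map_add' := fun _ _ => rfl
      map_smul' := fun _ _ => rfl }
  have hsum3 : HasSum (fun k : ℕ => ((-M) ^ k * T⁻¹) x x')
      (((∑' k : ℕ, (-M) ^ k) * T⁻¹) x x') :=
    (LinearMap.toContinuousLinearMap φ).hasSum hsum2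
  have hgs : HasSum (fun k : ℕ => ε ^ k * (B * w x x')) ((1 - ε)⁻¹ * (B * w x x')) :=
    (hasSum_geometric_of_lt_one hε0 hεlt).mul_right _
  have hbound : ‖((∑' k : ℕ, (-M) ^ k) * T⁻¹) x x'‖ ≤ (1 - ε)⁻¹ * (B * w x x') := by
    rw [← hsum3.tsum_eq]
    exact tsum_of_norm_bounded hgs fun k => by
      simpa [mul_assoc] using pow_bound k x x'
  have hfinal : (1 - ε)⁻¹ * (B * w x x') ≤ 2 * B * w x x' := by
    have h2 : (1 - ε)⁻¹ ≤ 2 := by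
      rw [inv_le_comm₀ (by linarith) (by norm_num)]
      linarith
    have hbw : 0 ≤ B * w x x' := by positivity
    calc (1 - ε)⁻¹ * (B * w x x') ≤ 2 * (B * w x x') :=
          mul_le_mul_of_nonneg_right h2 hbw
      _ = 2 * B * w x x' := by ring
  calc ‖T'⁻¹ x x'‖ = ‖((∑' k : ℕ, (-M) ^ k) * T⁻¹) x x'‖ := by rw [hinv]
    _ ≤ (1 - ε)⁻¹ * (B * w x x') := hbound
    _ ≤ 2 * B * w x x' := hfinal
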